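/- Let g ≥ 1. For any primitive element a of L = ℤ^{2g}, there exists an element φ of the subgroup of Sp(2g, ℤ) generated by the square transvections T_c^2, where c ranges over the nonzero vectors Σ_{i=1}^g (ε_i x_i + δ_i y_i) with all ε_i, δ_i ∈ {0, 1}, such that φ(a) is either itself a nonzero vector Σ_{i=1}^g (ε_i x_i + δ_i y_i) with all ε_i, δ_i ∈ {0, 1}, or φ(a) = −x_i for some i with 1 ≤ i ≤ g. -/

import Mathlib

namespace Paper

/-- `L g = ℤ^{2g}`, with basis indexed by `Fin g × Bool`:
`(i, false)` corresponds to `x_i` and `(i, true)` to `y_i`. -/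
abbrev L (g : ℕ) := (Fin g × Bool) → ℤ

/-- The standard symplectic form on `ℤ^{2g}`. -/
def omg {g : ℕ} (a b : L g) : ℤ :=
  ∑ i : Fin g, (a (i, false) * b (i, true) - a (i, true) * b (i, false))

lemma omg_add_right {g : ℕ} (a v w : L g) : omg a (v + w) = omg a v + omg a w := by
  simp only [omg, Pi.add_apply]
  rw [← Finset.sum_add_distrib]
  exact Finset.sum_congr rfl fun i _ => by ring

lemma omg_sub_right {g : ℕ} (a v w : L g) : omg a (v - w) = omg a v - omg a w := by
  simp only [omg, Pi.sub_apply]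
  rw [← Finset.sum_sub_distrib]
  exact Finset.sum_congr rfl fun i _ => by ring

lemma omg_smul_right {g : ℕ} (a : L g) (c : ℤ) (v : L g) : omg a (c • v) = c * omg a v := by
  simp only [omg, Pi.smul_apply, smul_eq_mul]
  rw [Finset.mul_sum]
  exact Finset.sum_congr rfl fun i _ => by ring

lemma omg_self {g : ℕ} (a : L g) : omg a a = 0 :=
  Finset.sum_eq_zero fun i _ => by ring

/-- A vector of `ℤ^{2g}` is primitive if it is not a nontrivial integer multiple. -/
def Primitive {g : ℕ} (a : L g) : Prop :=
  ¬ ∃ (n : ℤ) (b : L g), n ≠ 0 ∧ n ≠ 1 ∧ n ≠ -1 ∧ a = n • b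

/-- The transvection `T_a : v ↦ v + (a,v)·a`, as a linear automorphism of `ℤ^{2g}`. -/
def T {g : ℕ} (a : L g) : L g ≃ₗ[ℤ] L g where
  toFun v := v + omg a v • a
  invFun v := v - omg a v • a
  map_add' v w := by
    show (v + w) + omg a (v + w) • a = (v + omg a v • a) + (w + omg a w • a)
    rw [omg_add_right, add_smul]; abel
  map_smul' c v := by
    show (c • v) + omg a (c • v) • a = c • (v + omg a v • a)
    rw [omg_smul_right, mul_smul, smul_add]
  left_inv v := by
    show v + omg a v • a - omg a (v + omg a v • a) • a = v
    rw [omg_add_right, omg_smul_right, omg_self, mul_zero, add_zero]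
    abel
  right_inv v := by
    show v - omg a v • a + omg a (v - omg a v • a) • a = v
    rw [omg_sub_right, omg_smul_right, omg_self, mul_zero, sub_zero]
    abel

/-- `Sp(2g, ℤ)`: the group of linear automorphisms of `ℤ^{2g}` preserving
the symplectic form. -/
def Sp (g : ℕ) : Subgroup (L g ≃ₗ[ℤ] L g) where
  carrier := {φ | ∀ v w : L g, omg (φ v) (φ w) = omg v w}
  one_mem' := fun v w => rfl
  mul_mem' := by
    intro φ ψ hφ hψ v w
    exact (hφ (ψ v) (ψ w)).trans (hψ v w)
  inv_mem' := by
    intro φ hφ v w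
    have h := hφ (φ⁻¹ v) (φ⁻¹ w)
    have h1 : φ (φ⁻¹ v) = v := φ.apply_symm_apply v
    have h2 : φ (φ⁻¹ w) = w := φ.apply_symm_apply w
    rw [h1, h2] at h
    exact h.symm

/-- Reduction modulo 2, as a monoid homomorphism from the linear automorphism
group of `ℤ^{2g}` to matrices over `ℤ/2`. -/
def redHom (g : ℕ) :
    (L g ≃ₗ[ℤ] L g) →* Matrix (Fin g × Bool) (Fin g × Bool) (ZMod 2) where
  toFun φ := (LinearMap.toMatrix' (φ : L g →ₗ[ℤ] L g)).map (Int.castRingHom (ZMod 2))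
  map_one' := by
    show (LinearMap.toMatrix' ((1 : L g ≃ₗ[ℤ] L g) : L g →ₗ[ℤ] L g)).map
      (Int.castRingHom (ZMod 2)) = 1
    rw [LinearEquiv.coe_toLinearMap_one, LinearMap.toMatrix'_id,
      Matrix.map_one _ (map_zero _) (map_one _)]
  map_mul' φ ψ := by
    show (LinearMap.toMatrix' ((φ * ψ : L g ≃ₗ[ℤ] L g) : L g →ₗ[ℤ] L g)).map
        (Int.castRingHom (ZMod 2)) =
      (LinearMap.toMatrix' (φ : L g →ₗ[ℤ] L g)).map (Int.castRingHom (ZMod 2)) *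
      (LinearMap.toMatrix' (ψ : L g →ₗ[ℤ] L g)).map (Int.castRingHom (ZMod 2))
    rw [LinearEquiv.coe_toLinearMap_mul, LinearMap.toMatrix'_mul, Matrix.map_mul]

/-- `Sp^{(2)}(2g)`: the kernel of the reduction homomorphism
`Sp(2g, ℤ) → Sp(2g, ℤ/2)`, i.e. the symplectic automorphisms reducing to
the identity modulo 2. -/
def SpTwo (g : ℕ) : Subgroup (L g ≃ₗ[ℤ] L g) := Sp g ⊓ (redHom g).ker


/-! ### Infrastructure -/

variable {g : ℕ}

/-- The subgroup generated by squares of transvections about 0-1 vectors. -/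
def GG (g : ℕ) : Subgroup (L g ≃ₗ[ℤ] L g) :=
  Subgroup.closure
    {ψ : L g ≃ₗ[ℤ] L g |
      ∃ c : L g, (∀ p, c p = 0 ∨ c p = 1) ∧ c ≠ 0 ∧ ψ = (T c) ^ 2}

/-- Reachability under the group `GG`. -/
def Reach {g : ℕ} (a b : L g) : Prop := ∃ φ ∈ GG g, φ a = b

lemma Reach.refl' (a : L g) : Reach a a := ⟨1, one_mem _, rfl⟩

lemma Reach.trans' {a b c : L g} (h1 : Reach a b) (h2 : Reach b c) : Reach a c := by
  obtain ⟨φ, hφ, ha⟩ := h1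
  obtain ⟨ψ, hψ, hb⟩ := h2
  exact ⟨ψ * φ, mul_mem hψ hφ, by show ψ (φ a) = c; rw [ha, hb]⟩

lemma omg_add_left {g : ℕ} (a b v : L g) : omg (a + b) v = omg a v + omg b v := by
  simp only [omg, Pi.add_apply]
  rw [← Finset.sum_add_distrib]
  exact Finset.sum_congr rfl fun i _ => by ring

lemma T_apply (c v : L g) : T c v = v + omg c v • c := rfl

lemma Tsq_apply (c v : L g) : ((T c) ^ 2) v = v + (2 * omg c v) • c := by
  have h : ((T c) ^ 2) v = T c (T c v) := by rw [pow_two]; rfl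
  rw [h, T_apply, T_apply, omg_add_right, omg_smul_right, omg_self, mul_zero, add_zero]
  module

lemma Tsq_inv_apply (c v : L g) : (((T c) ^ 2)⁻¹) v = v - (2 * omg c v) • c := by
  have h : ((T c) ^ 2) (v - (2 * omg c v) • c) = v := by
    rw [Tsq_apply, omg_sub_right, omg_smul_right, omg_self, mul_zero, sub_zero]
    module
  have h2 : (((T c) ^ 2)⁻¹) (((T c) ^ 2) (v - (2 * omg c v) • c)) = v - (2 * omg c v) • c :=
    LinearEquiv.symm_apply_apply _ _
  rw [h] at h2
  exact h2

lemma Tsq_zpow_apply (c : L g) (k : ℤ) (v : L g) :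
    (((T c) ^ 2) ^ k) v = v + (2 * k * omg c v) • c := by
  induction k using Int.induction_on generalizing v with
  | zero => simp
  | succ n ih =>
      rw [zpow_add_one]
      have : ((((T c) ^ 2) ^ (n : ℤ)) * ((T c) ^ 2)) v = (((T c) ^ 2) ^ (n : ℤ)) (((T c) ^ 2) v) := rfl
      rw [this, Tsq_apply, ih, omg_add_right, omg_smul_right, omg_self, mul_zero, add_zero]
      have e : (2 * ((n : ℤ) + 1) * omg c v) = 2 * omg c v + 2 * (n : ℤ) * omg c v := by ring
      rw [e, add_smul]; abel
  | pred n ih =>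
      rw [zpow_sub_one]
      have : ((((T c) ^ 2) ^ (-(n : ℤ))) * ((T c) ^ 2)⁻¹) v
          = (((T c) ^ 2) ^ (-(n : ℤ))) ((((T c) ^ 2)⁻¹) v) := rfl
      rw [this, Tsq_inv_apply, ih, omg_sub_right, omg_smul_right, omg_self, mul_zero, sub_zero]
      have e : (2 * (-(n : ℤ) - 1) * omg c v) = 2 * (-(n:ℤ)) * omg c v - 2 * omg c v := by ring
      rw [e, sub_smul]; abel

/-- The basic move: apply `(T c)^{2k}`. -/
lemma step {c : L g} (h01 : ∀ p, c p = 0 ∨ c p = 1) (hne : c ≠ 0) (k : ℤ) (a : L g) :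
    Reach a (a + (2 * k * omg c a) • c) := by
  refine ⟨((T c) ^ 2) ^ k, Subgroup.zpow_mem _ (Subgroup.subset_closure ?_) k,
    Tsq_zpow_apply c k a⟩
  exact ⟨c, h01, hne, rfl⟩

/-- Indicator basis vector. -/
def E {g : ℕ} (p : Fin g × Bool) : L g := fun q => if q = p then 1 else 0

lemma E_01 (p : Fin g × Bool) : ∀ q, E p q = 0 ∨ E p q = 1 := by
  intro q; unfold E; split <;> simp

lemma E_ne (p : Fin g × Bool) : E p ≠ (0 : L g) := by
  intro h
  have := congrFun h p
  simp [E] at this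

lemma EE_01 {p q : Fin g × Bool} (h : p ≠ q) : ∀ r, (E p + E q) r = 0 ∨ (E p + E q) r = 1 := by
  intro r
  simp only [Pi.add_apply, E]
  by_cases h1 : r = p <;> by_cases h2 : r = q <;> simp_all

lemma EE_ne {p q : Fin g × Bool} (h : p ≠ q) : E p + E q ≠ (0 : L g) := by
  intro hc
  have := congrFun hc p
  simp [E, h] at this

lemma omg_E_false (i : Fin g) (a : L g) : omg (E (i, false)) a = a (i, true) := by
  unfold omg E
  rw [Finset.sum_eq_single i]
  · simp
  · intro j _ hj
    simp [Prod.ext_iff, hj]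
  · simp

lemma omg_E_true (i : Fin g) (a : L g) : omg (E (i, true)) a = -(a (i, false)) := by
  unfold omg E
  rw [Finset.sum_eq_single i]
  · simp
  · intro j _ hj
    simp [Prod.ext_iff, hj]
  · simp

lemma coord_add_smul_E (a : L g) (t : ℤ) (p q : Fin g × Bool) :
    (a + t • E p) q = a q + (if q = p then t else 0) := by
  simp only [Pi.add_apply, Pi.smul_apply, smul_eq_mul, E]
  split <;> ring

lemma coord_add_smul_EE (a : L g) (t : ℤ) (p p' q : Fin g × Bool) :
    (a + t • (E p + E p')) q = a q + (if q = p then t else 0) + (if q = p' then t else 0) := by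
  simp only [Pi.add_apply, Pi.smul_apply, smul_eq_mul, E]
  by_cases h1 : q = p <;> by_cases h2 : q = p' <;> simp_all <;> ring

/-! ### Measure -/

/-- Exponential measure. -/
def meas {g : ℕ} (a : L g) : ℕ := ∑ p : Fin g × Bool, 3 ^ (a p).natAbs

lemma meas_lt_one {a b : L g} (p0 : Fin g × Bool)
    (h : ∀ p, p ≠ p0 → b p = a p) (hlt : (b p0).natAbs < (a p0).natAbs) :
    meas b < meas a := by
  unfold meas
  rw [← Finset.sum_erase_add _ _ (Finset.mem_univ p0),
    ← Finset.sum_erase_add _ _ (Finset.mem_univ p0)]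
  have hsum : ∑ p ∈ Finset.univ.erase p0, 3 ^ (b p).natAbs
      = ∑ p ∈ Finset.univ.erase p0, 3 ^ (a p).natAbs :=
    Finset.sum_congr rfl fun p hp => by rw [h p (Finset.ne_of_mem_erase hp)]
  rw [hsum]
  exact Nat.add_lt_add_left (Nat.pow_lt_pow_right (by norm_num) hlt) _

lemma meas_lt_two {a b : L g} (p0 p1 : Fin g × Bool) (hne : p1 ≠ p0)
    (h : ∀ p, p ≠ p0 → p ≠ p1 → b p = a p)
    (h0 : (b p0).natAbs < (a p0).natAbs) (h1 : (b p1).natAbs < (a p0).natAbs) :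
    meas b < meas a := by
  unfold meas
  have hmem : p1 ∈ Finset.univ.erase p0 := Finset.mem_erase.mpr ⟨hne, Finset.mem_univ _⟩
  rw [← Finset.sum_erase_add _ _ (Finset.mem_univ p0),
    ← Finset.sum_erase_add _ _ hmem,
    ← Finset.sum_erase_add _ (fun p => 3 ^ (a p).natAbs) (Finset.mem_univ p0),
    ← Finset.sum_erase_add _ (fun p => 3 ^ (a p).natAbs) hmem]
  have hsum : ∑ p ∈ (Finset.univ.erase p0).erase p1, 3 ^ (b p).natAbs
      = ∑ p ∈ (Finset.univ.erase p0).erase p1, 3 ^ (a p).natAbs := by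
    refine Finset.sum_congr rfl fun p hp => ?_
    have hp1 := Finset.ne_of_mem_erase hp
    have hp0 := Finset.ne_of_mem_erase (Finset.mem_of_mem_erase hp)
    rw [h p hp0 hp1]
  rw [hsum]
  set M := (a p0).natAbs with hM
  have hM1 : 1 ≤ M := by omega
  have e0 : 3 ^ (b p0).natAbs ≤ 3 ^ (M - 1) := Nat.pow_le_pow_right (by norm_num) (by omega)
  have e1 : 3 ^ (b p1).natAbs ≤ 3 ^ (M - 1) := Nat.pow_le_pow_right (by norm_num) (by omega)
  have e2 : 3 ^ M = 3 ^ (M - 1) * 3 := by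
    rw [← pow_succ]; congr 1; omega
  have e3 : 1 ≤ 3 ^ (a p1).natAbs := Nat.one_le_pow _ _ (by norm_num)
  have e4 : 0 < 3 ^ (M - 1) := Nat.pow_pos (by norm_num)
  omega

/-! ### Integer reduction lemmas -/

lemma redstep {x s : ℤ} (hs : 0 < s.natAbs) (h : s.natAbs < x.natAbs) :
    ∃ k : ℤ, (x + 2 * k * s).natAbs < x.natAbs := by
  refine ⟨if 0 ≤ x then (if 0 ≤ s then -1 else 1) else (if 0 ≤ s then 1 else -1), ?_⟩
  split_ifs <;> (ring_nf; omega)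

lemma red (s : ℤ) (hs : s ≠ 0) (x : ℤ) : ∃ k : ℤ, (x + 2 * k * s).natAbs ≤ s.natAbs := by
  have hs' : 0 < s.natAbs := by omega
  have H : ∀ n : ℕ, ∀ x : ℤ, x.natAbs ≤ n → ∃ k : ℤ, (x + 2 * k * s).natAbs ≤ s.natAbs := by
    intro n
    induction n with
    | zero => intro x hx; exact ⟨0, by omega⟩
    | succ n ih =>
        intro x hx
        by_cases hle : x.natAbs ≤ s.natAbs
        · exact ⟨0, by omega⟩
        · obtain ⟨k0, hk0⟩ := redstep hs' (by omega : s.natAbs < x.natAbs)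
          obtain ⟨k, hk⟩ := ih (x + 2 * k0 * s) (by omega)
          refine ⟨k0 + k, ?_⟩
          have : x + 2 * (k0 + k) * s = (x + 2 * k0 * s) + 2 * k * s := by ring
          rw [this]
          exact hk
  exact H x.natAbs x le_rfl

/-! ### Primitivity lemmas -/

lemma prim_reach {a b : L g} (h : Reach a b) (ha : Primitive a) : Primitive b := by
  obtain ⟨φ, _, hφ⟩ := h
  rintro ⟨n, c, hn0, hn1, hn2, hbc⟩
  exact ha ⟨n, φ.symm c, hn0, hn1, hn2, by
    rw [← φ.symm_apply_apply a, hφ, hbc, map_smul]⟩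

lemma prim_ne_zero {a : L g} (ha : Primitive a) : a ≠ 0 := by
  rintro rfl
  exact ha ⟨2, 0, by norm_num, by norm_num, by norm_num, by simp⟩

/-! ### Endgame: fixing signs within a handle -/

lemma fne (i : Fin g) : ((i, false) : Fin g × Bool) ≠ (i, true) := by simp

lemma stepF (a : L g) (i : Fin g) (k : ℤ) :
    Reach a (a + (2 * k * a (i, true)) • E (i, false)) := by
  have h := step (E_01 (i, false)) (E_ne (i, false)) k a
  rwa [omg_E_false] at h

lemma stepT (a : L g) (i : Fin g) (k : ℤ) :
    Reach a (a + (2 * k * -(a (i, false))) • E (i, true)) := by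
  have h := step (E_01 (i, true)) (E_ne (i, true)) k a
  rwa [omg_E_true] at h

lemma stepW (a : L g) (i : Fin g) (k : ℤ) :
    Reach a (a + (2 * k * (a (i, true) - a (i, false))) • (E (i, false) + E (i, true))) := by
  have h := step (EE_01 (fne i)) (EE_ne (fne i)) k a
  rwa [omg_add_left, omg_E_false, omg_E_true, ← sub_eq_add_neg] at h

lemma fix_handle (a : L g) (i : Fin g)
    (hp : (a (i, false)).natAbs ≤ 1) (hq : (a (i, true)).natAbs ≤ 1) :
    ∃ b : L g, Reach a b ∧ b (i, false) = ((a (i, false)).natAbs : ℤ)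
      ∧ b (i, true) = ((a (i, true)).natAbs : ℤ)
      ∧ ∀ p, p ≠ (i, false) → p ≠ (i, true) → b p = a p := by
  have hp3 : a (i, false) = -1 ∨ a (i, false) = 0 ∨ a (i, false) = 1 := by omega
  have hq3 : a (i, true) = -1 ∨ a (i, true) = 0 ∨ a (i, true) = 1 := by omega
  rcases hp3 with hpf | hpf | hpf <;> rcases hq3 with hqf | hqf | hqf
  -- (-1,-1) : stepF k=-1 then stepT k=-1
  · have s1 := stepF a i (-1)
    have s2 := stepT (a + (2 * (-1) * a (i, true)) • E (i, false)) i (-1)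
    refine ⟨_, s1.trans' s2, ?_, ?_, ?_⟩
    · simp only [coord_add_smul_E, hpf, hqf]; simp [fne i]
    · simp only [coord_add_smul_E, hpf, hqf]; simp [fne i]
    · intro p h1 h2
      simp only [coord_add_smul_E, if_neg h1, if_neg h2, add_zero]
  -- (-1,0) : stepT k=-1 then stepW k=-1
  · have s1 := stepT a i (-1)
    have s2 := stepW (a + (2 * (-1) * -(a (i, false))) • E (i, true)) i (-1)
    refine ⟨_, s1.trans' s2, ?_, ?_, ?_⟩
    · simp only [coord_add_smul_E, coord_add_smul_EE, hpf, hqf]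
      simp [fne i, (fne i).symm]
    · simp only [coord_add_smul_E, coord_add_smul_EE, hpf, hqf]
      simp [fne i, (fne i).symm]
    · intro p h1 h2
      simp only [coord_add_smul_E, coord_add_smul_EE, if_neg h1, if_neg h2, add_zero]
  -- (-1,1) : stepF k=1
  · refine ⟨_, stepF a i 1, ?_, ?_, ?_⟩
    · simp only [coord_add_smul_E, hpf, hqf]; simp
    · simp only [coord_add_smul_E, hpf, hqf]; simp [(fne i).symm]
    · intro p h1 h2
      simp only [coord_add_smul_E, if_neg h1, add_zero]
  -- (0,-1) : stepF k=1 then stepW k=1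
  · have s1 := stepF a i 1
    have s2 := stepW (a + (2 * 1 * a (i, true)) • E (i, false)) i 1
    refine ⟨_, s1.trans' s2, ?_, ?_, ?_⟩
    · simp only [coord_add_smul_E, coord_add_smul_EE, hpf, hqf]
      simp [fne i, (fne i).symm]
    · simp only [coord_add_smul_E, coord_add_smul_EE, hpf, hqf]
      simp [fne i, (fne i).symm]
    · intro p h1 h2
      simp only [coord_add_smul_E, coord_add_smul_EE, if_neg h1, if_neg h2, add_zero]
  -- (0,0)
  · exact ⟨a, Reach.refl' a, by omega, by omega, fun p _ _ => rfl⟩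
  -- (0,1)
  · exact ⟨a, Reach.refl' a, by omega, by omega, fun p _ _ => rfl⟩
  -- (1,-1) : stepT k=-1
  · refine ⟨_, stepT a i (-1), ?_, ?_, ?_⟩
    · simp only [coord_add_smul_E, hpf, hqf]; simp [fne i]
    · simp only [coord_add_smul_E, hpf, hqf]; simp
    · intro p h1 h2
      simp only [coord_add_smul_E, if_neg h2, add_zero]
  -- (1,0)
  · exact ⟨a, Reach.refl' a, by omega, by omega, fun p _ _ => rfl⟩
  -- (1,1)
  · exact ⟨a, Reach.refl' a, by omega, by omega, fun p _ _ => rfl⟩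

lemma fix_all (s : Finset (Fin g)) :
    ∀ a : L g, (∀ p, (a p).natAbs ≤ 1) →
      ∃ b : L g, Reach a b ∧ (∀ p : Fin g × Bool, p.1 ∈ s → b p = ((a p).natAbs : ℤ))
        ∧ (∀ p : Fin g × Bool, p.1 ∉ s → b p = a p) := by
  induction s using Finset.induction_on with
  | empty => intro a _; exact ⟨a, Reach.refl' a, fun p hp => absurd hp (by simp), fun _ _ => rfl⟩
  | @insert i s his ih =>
      intro a ha
      obtain ⟨b1, hr1, hin1, hout1⟩ := ih a ha
      have hbf : b1 (i, false) = a (i, false) := hout1 (i, false) his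
      have hbt : b1 (i, true) = a (i, true) := hout1 (i, true) his
      obtain ⟨b2, hr2, hf2, ht2, hrest2⟩ := fix_handle b1 i
        (by rw [hbf]; exact ha _) (by rw [hbt]; exact ha _)
      refine ⟨b2, hr1.trans' hr2, ?_, ?_⟩
      · rintro ⟨j, bb⟩ hj
        rcases Finset.mem_insert.mp hj with rfl | hj'
        · cases bb
          · rw [hf2, hbf]
          · rw [ht2, hbt]
        · have hji : j ≠ i := fun h => his (h ▸ hj')
          rw [hrest2 _ (by simp [hji]) (by simp [hji]), hin1 _ hj']
      · rintro ⟨j, bb⟩ hj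
        have hji : j ≠ i := fun h => hj (by simp [h])
        rw [hrest2 _ (by simp [hji]) (by simp [hji]),
          hout1 _ (fun h => hj (Finset.mem_insert_of_mem h))]

lemma endgame (a : L g) (ha : Primitive a) (hsmall : ∀ p, (a p).natAbs ≤ 1) :
    ∃ b : L g, Reach a b ∧ (∀ p, b p = 0 ∨ b p = 1) ∧ b ≠ 0 := by
  obtain ⟨b, hr, hin, _⟩ := fix_all Finset.univ a hsmall
  have hb : ∀ p, b p = ((a p).natAbs : ℤ) := fun p => hin p (Finset.mem_univ _)
  refine ⟨b, hr, fun p => by rw [hb p]; have := hsmall p; omega, ?_⟩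
  have hane : a ≠ 0 := prim_ne_zero ha
  have : ∃ p, a p ≠ 0 := by
    by_contra h
    push_neg at h
    exact hane (funext h)
  obtain ⟨p, hp⟩ := this
  intro hb0
  have := congrFun hb0 p
  rw [hb p] at this
  simp only [Pi.zero_apply] at this
  omega

lemma descent (a : L g) (ha : Primitive a) (pM : Fin g × Bool)
    (hmax : ∀ p, (a p).natAbs ≤ (a pM).natAbs) (h2 : 2 ≤ (a pM).natAbs) :
    ∃ b : L g, Reach a b ∧ meas b < meas a := by
  obtain ⟨iM, bM⟩ := pM
  set m := (a (iM, bM)).natAbs with hm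
  by_cases hC1 : ∃ i : Fin g, 0 < (a (i, false)).natAbs
      ∧ (a (i, false)).natAbs < (a (i, true)).natAbs
  · obtain ⟨i, hx1, hxy⟩ := hC1
    obtain ⟨k, hk⟩ := red (-(a (i, false))) (by omega) (a (i, true))
    refine ⟨_, stepT a i k, meas_lt_one (i, true) ?_ ?_⟩
    · intro p hp; rw [coord_add_smul_E, if_neg hp, add_zero]
    · rw [coord_add_smul_E, if_pos rfl]
      have e : a (i, true) + 2 * k * -(a (i, false))
          = a (i, true) + 2 * k * -(a (i, false)) := rfl
      omega
  by_cases hC2 : ∃ i : Fin g, 0 < (a (i, true)).natAbs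
      ∧ (a (i, true)).natAbs < (a (i, false)).natAbs
  · obtain ⟨i, hy1, hyx⟩ := hC2
    obtain ⟨k, hk⟩ := red (a (i, true)) (by omega) (a (i, false))
    refine ⟨_, stepF a i k, meas_lt_one (i, false) ?_ ?_⟩
    · intro p hp; rw [coord_add_smul_E, if_neg hp, add_zero]
    · rw [coord_add_smul_E, if_pos rfl]
      omega
  push_neg at hC1 hC2
  have hone : (a (iM, false)).natAbs = m ∨ (a (iM, true)).natAbs = m := by
    cases bM
    · exact Or.inl rfl
    · exact Or.inr rfl
  by_cases hs : ∃ q : Fin g × Bool, q.1 ≠ iM ∧ 0 < (a q).natAbs ∧ (a q).natAbs < m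
  case neg =>
    exfalso
    push_neg at hs
    have hall : ∀ p, (a p).natAbs = 0 ∨ (a p).natAbs = m := by
      rintro ⟨pj, pb⟩
      by_cases hpj : pj = iM
      · subst hpj
        have e1 := hC1 pj
        have e2 := hC2 pj
        have e3 := hmax (pj, false)
        have e4 := hmax (pj, true)
        have e5 := hone
        cases pb <;> omega
      · have e1 := hs (pj, pb) hpj
        have e2 := hmax (pj, pb)
        omega
    set b : L g := fun p => if a p = (m : ℤ) then 1 else if a p = -(m : ℤ) then -1 else 0
      with hbdef
    refine ha ⟨(m : ℤ), b, by omega, by omega, by omega, funext fun p => ?_⟩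
    have := hall p
    simp only [hbdef, Pi.smul_apply, smul_eq_mul]
    split_ifs with e1 e2 <;> omega
  case pos =>
    obtain ⟨⟨j, sb⟩, hji, hs0, hsm⟩ := hs
    simp only at hji hs0 hsm
    have hij : iM ≠ j := Ne.symm hji
    by_cases hY0 : a (iM, false) = 0
    · -- type Y
      have hym : (a (iM, true)).natAbs = m := by omega
      cases sb
      · -- s = a (j, false); c1 = E (iM,true) + E (j,true), then restore (j,true)
        obtain ⟨k, hk⟩ := red (a (j, false)) (by omega) (a (iM, true))
        have hne1 : ((iM, true) : Fin g × Bool) ≠ (j, true) := by simp [hij]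
        have s1 := step (EE_01 hne1) (EE_ne hne1) (-k) a
        set a1 := a + (2 * (-k) * omg (E (iM, true) + E (j, true)) a) •
          (E (iM, true) + E (j, true)) with ha1
        have s2 := stepT a1 j k
        refine ⟨_, s1.trans' s2, meas_lt_one (iM, true) ?_ ?_⟩
        · intro p hp
          by_cases hpj : p = (j, true)
          · subst hpj
            simp only [ha1, coord_add_smul_E, coord_add_smul_EE, omg_add_left,
              omg_E_false, omg_E_true, Prod.mk.injEq, hY0]
            try simp [hij, hji]
            try ring
          · simp only [ha1, coord_add_smul_E, coord_add_smul_EE,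
              if_neg hp, if_neg hpj, add_zero]
        · have hb : (a1 + (2 * k * -(a1 (j, false))) • E (j, true)) (iM, true)
              = a (iM, true) + 2 * k * a (j, false) := by
            simp only [ha1, coord_add_smul_E, coord_add_smul_EE, omg_add_left,
              omg_E_false, omg_E_true, Prod.mk.injEq, hY0]
            try simp [hij, hji]
            try ring
          rw [hb]
          omega
      · -- s = a (j, true); c1 = E (j,false) + E (iM,true), then restore (j,false)
        obtain ⟨k, hk⟩ := red (a (j, true)) (by omega) (a (iM, true))
        have hne1 : ((j, false) : Fin g × Bool) ≠ (iM, true) := by simp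
        have s1 := step (EE_01 hne1) (EE_ne hne1) k a
        set a1 := a + (2 * k * omg (E (j, false) + E (iM, true)) a) •
          (E (j, false) + E (iM, true)) with ha1
        have s2 := stepF a1 j (-k)
        refine ⟨_, s1.trans' s2, meas_lt_one (iM, true) ?_ ?_⟩
        · intro p hp
          by_cases hpj : p = (j, false)
          · subst hpj
            simp only [ha1, coord_add_smul_E, coord_add_smul_EE, omg_add_left,
              omg_E_false, omg_E_true, Prod.mk.injEq, hY0]
            try simp [hij, hji]
            try ring
          · simp only [ha1, coord_add_smul_E, coord_add_smul_EE,
              if_neg hp, if_neg hpj, add_zero]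
        · have hb : (a1 + (2 * (-k) * a1 (j, true)) • E (j, false)) (iM, true)
              = a (iM, true) + 2 * k * a (j, true) := by
            simp only [ha1, coord_add_smul_E, coord_add_smul_EE, omg_add_left,
              omg_E_false, omg_E_true, Prod.mk.injEq, hY0]
            try simp [hij, hji]
            try ring
          rw [hb]
          omega
    by_cases hX0 : a (iM, true) = 0
    · -- type X
      have hxm : (a (iM, false)).natAbs = m := by omega
      cases sb
      · -- s = a (j, false); c1 = E (iM,false) + E (j,true), then restore (j,true)
        obtain ⟨k, hk⟩ := red (a (j, false)) (by omega) (a (iM, false))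
        have hne1 : ((iM, false) : Fin g × Bool) ≠ (j, true) := by simp
        have s1 := step (EE_01 hne1) (EE_ne hne1) (-k) a
        set a1 := a + (2 * (-k) * omg (E (iM, false) + E (j, true)) a) •
          (E (iM, false) + E (j, true)) with ha1
        have s2 := stepT a1 j k
        refine ⟨_, s1.trans' s2, meas_lt_one (iM, false) ?_ ?_⟩
        · intro p hp
          by_cases hpj : p = (j, true)
          · subst hpj
            simp only [ha1, coord_add_smul_E, coord_add_smul_EE, omg_add_left,
              omg_E_false, omg_E_true, Prod.mk.injEq, hX0]
            try simp [hij, hji]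
            try ring
          · simp only [ha1, coord_add_smul_E, coord_add_smul_EE,
              if_neg hp, if_neg hpj, add_zero]
        · have hb : (a1 + (2 * k * -(a1 (j, false))) • E (j, true)) (iM, false)
              = a (iM, false) + 2 * k * a (j, false) := by
            simp only [ha1, coord_add_smul_E, coord_add_smul_EE, omg_add_left,
              omg_E_false, omg_E_true, Prod.mk.injEq, hX0]
            try simp [hij, hji]
            try ring
          rw [hb]
          omega
      · -- s = a (j, true); c1 = E (iM,false) + E (j,false), then restore (j,false)
        obtain ⟨k, hk⟩ := red (a (j, true)) (by omega) (a (iM, false))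
        have hne1 : ((iM, false) : Fin g × Bool) ≠ (j, false) := by simp [hij]
        have s1 := step (EE_01 hne1) (EE_ne hne1) k a
        set a1 := a + (2 * k * omg (E (iM, false) + E (j, false)) a) •
          (E (iM, false) + E (j, false)) with ha1
        have s2 := stepF a1 j (-k)
        refine ⟨_, s1.trans' s2, meas_lt_one (iM, false) ?_ ?_⟩
        · intro p hp
          by_cases hpj : p = (j, false)
          · subst hpj
            simp only [ha1, coord_add_smul_E, coord_add_smul_EE, omg_add_left,
              omg_E_false, omg_E_true, Prod.mk.injEq, hX0]
            try simp [hij, hji]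
            try ring
          · simp only [ha1, coord_add_smul_E, coord_add_smul_EE,
              if_neg hp, if_neg hpj, add_zero]
        · have hb : (a1 + (2 * (-k) * a1 (j, true)) • E (j, false)) (iM, false)
              = a (iM, false) + 2 * k * a (j, true) := by
            simp only [ha1, coord_add_smul_E, coord_add_smul_EE, omg_add_left,
              omg_E_false, omg_E_true, Prod.mk.injEq, hX0]
            try simp [hij, hji]
            try ring
          rw [hb]
          omega
    · -- type D
      have e1 := hC1 iM
      have e2 := hC2 iM
      have e3 := hmax (iM, false)
      have e4 := hmax (iM, true)
      have hxm : (a (iM, false)).natAbs = m := by omega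
      have hym : (a (iM, true)).natAbs = m := by omega
      cases sb
      · -- s = a (j, false): work on the `true` coordinates
        obtain ⟨k0, hk0⟩ := redstep (x := a (iM, true)) hs0 (by omega)
        have hne1 : ((iM, true) : Fin g × Bool) ≠ (j, true) := by simp [hij]
        have s1 := step (EE_01 hne1) (EE_ne hne1) (-k0) a
        set a1 := a + (2 * (-k0) * omg (E (iM, true) + E (j, true)) a) •
          (E (iM, true) + E (j, true)) with ha1
        have s2 := stepT a1 iM k0
        set a2 := a1 + (2 * k0 * -(a1 (iM, false))) • E (iM, true) with ha2
        have s3 := stepT a2 j k0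
        set a3 := a2 + (2 * k0 * -(a2 (j, false))) • E (j, true) with ha3
        obtain ⟨k4, hk4⟩ := red (a (j, false)) (by omega)
          (a (j, true) + 2 * k0 * a (iM, false))
        have s4 := stepT a3 j (-k4)
        refine ⟨_, ((s1.trans' s2).trans' s3).trans' s4,
          meas_lt_two (iM, true) (j, true) (by simp [hji]) ?_ ?_ ?_⟩
        · intro p h1 h2
          simp only [ha3, ha2, ha1, coord_add_smul_E, coord_add_smul_EE,
            if_neg h1, if_neg h2, add_zero]
        · have hb : (a3 + (2 * (-k4) * -(a3 (j, false))) • E (j, true)) (iM, true)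
              = a (iM, true) + 2 * k0 * a (j, false) := by
            simp only [ha3, ha2, ha1, coord_add_smul_E, coord_add_smul_EE, omg_add_left,
              omg_E_false, omg_E_true, Prod.mk.injEq]
            try simp [hij, hji]
            try ring
          rw [hb]
          exact hk0
        · have hb : (a3 + (2 * (-k4) * -(a3 (j, false))) • E (j, true)) (j, true)
              = a (j, true) + 2 * k0 * a (iM, false) + 2 * k4 * a (j, false) := by
            simp only [ha3, ha2, ha1, coord_add_smul_E, coord_add_smul_EE, omg_add_left,
              omg_E_false, omg_E_true, Prod.mk.injEq]
            try simp [hij, hji]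
            try ring
          have hble : ((a3 + (2 * (-k4) * -(a3 (j, false))) • E (j, true)) (j, true)).natAbs
              ≤ (a (j, false)).natAbs := by rw [hb]; exact hk4
          omega
      · -- s = a (j, true): work on the `false` coordinates
        obtain ⟨k0, hk0⟩ := redstep (x := a (iM, false)) hs0 (by omega)
        have hne1 : ((iM, false) : Fin g × Bool) ≠ (j, false) := by simp [hij]
        have s1 := step (EE_01 hne1) (EE_ne hne1) k0 a
        set a1 := a + (2 * k0 * omg (E (iM, false) + E (j, false)) a) •
          (E (iM, false) + E (j, false)) with ha1
        have s2 := stepF a1 iM (-k0)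
        set a2 := a1 + (2 * (-k0) * a1 (iM, true)) • E (iM, false) with ha2
        have s3 := stepF a2 j (-k0)
        set a3 := a2 + (2 * (-k0) * a2 (j, true)) • E (j, false) with ha3
        obtain ⟨k4, hk4⟩ := red (a (j, true)) (by omega)
          (a (j, false) + 2 * k0 * a (iM, true))
        have s4 := stepF a3 j k4
        refine ⟨_, ((s1.trans' s2).trans' s3).trans' s4,
          meas_lt_two (iM, false) (j, false) (by simp [hji]) ?_ ?_ ?_⟩
        · intro p h1 h2
          simp only [ha3, ha2, ha1, coord_add_smul_E, coord_add_smul_EE,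
            if_neg h1, if_neg h2, add_zero]
        · have hb : (a3 + (2 * k4 * a3 (j, true)) • E (j, false)) (iM, false)
              = a (iM, false) + 2 * k0 * a (j, true) := by
            simp only [ha3, ha2, ha1, coord_add_smul_E, coord_add_smul_EE, omg_add_left,
              omg_E_false, omg_E_true, Prod.mk.injEq]
            try simp [hij, hji]
            try ring
          rw [hb]
          exact hk0
        · have hb : (a3 + (2 * k4 * a3 (j, true)) • E (j, false)) (j, false)
              = a (j, false) + 2 * k0 * a (iM, true) + 2 * k4 * a (j, true) := by
            simp only [ha3, ha2, ha1, coord_add_smul_E, coord_add_smul_EE, omg_add_left,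
              omg_E_false, omg_E_true, Prod.mk.injEq]
            try simp [hij, hji]
            try ring
          have hble : ((a3 + (2 * k4 * a3 (j, true)) • E (j, false)) (j, false)).natAbs
              ≤ (a (j, true)).natAbs := by rw [hb]; exact hk4
          omega

lemma main_lemma (hg : 1 ≤ g) : ∀ N : ℕ, ∀ a : L g, Primitive a → meas a ≤ N →
    ∃ b : L g, Reach a b ∧ (∀ p, b p = 0 ∨ b p = 1) ∧ b ≠ 0 := by
  intro N
  induction N with
  | zero =>
      intro a _ hle
      exfalso
      have hpos : 0 < meas a :=
        Finset.sum_pos (fun p _ => Nat.pow_pos (by norm_num))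
          ⟨((⟨0, hg⟩ : Fin g), false), Finset.mem_univ _⟩
      omega
  | succ N ih =>
      intro a ha hle
      by_cases hsmall : ∀ p, (a p).natAbs ≤ 1
      · exact endgame a ha hsmall
      · push_neg at hsmall
        obtain ⟨p0, hp0⟩ := hsmall
        obtain ⟨pM, _, hpM⟩ := Finset.exists_max_image Finset.univ
          (fun p => (a p).natAbs) ⟨p0, Finset.mem_univ _⟩
        have hmax : ∀ p, (a p).natAbs ≤ (a pM).natAbs := fun p => hpM p (Finset.mem_univ _)
        have h2 : 2 ≤ (a pM).natAbs := le_trans (by omega) (hmax p0)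
        obtain ⟨b, hr, hlt⟩ := descent a ha pM hmax h2
        obtain ⟨c, hrc, hc⟩ := ih b (prim_reach hr ha) (by omega)
        exact ⟨c, hr.trans' hrc, hc⟩
/-- For any primitive `a ∈ ℤ^{2g}` there is a `φ` in the subgroup generated by
the square transvections about the nonzero `0`-`1` vectors such that `φ(a)` is
either itself a nonzero `0`-`1` vector, or equals `-x_i` for some `i`. -/
theorem statement6 (g : ℕ) (hg : 1 ≤ g) (a : L g) (ha : Primitive a) :
    ∃ φ ∈ Subgroup.closure
        {ψ : L g ≃ₗ[ℤ] L g |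
          ∃ c : L g, (∀ p, c p = 0 ∨ c p = 1) ∧ c ≠ 0 ∧ ψ = (T c) ^ 2},
      ((∀ p, φ a p = 0 ∨ φ a p = 1) ∧ φ a ≠ 0) ∨
        ∃ i : Fin g, φ a = -Pi.single (i, false) 1 := by
  obtain ⟨b, ⟨φ, hφ, hφa⟩, h01, hne⟩ := main_lemma hg (meas a) a ha le_rfl
  exact ⟨φ, hφ, Or.inl ⟨by rw [hφa]; exact h01, by rw [hφa]; exact hne⟩⟩

end Paper
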